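/- Let m : (0, r₀] → (0, ∞) be differentiable and N : (0, r₀] → [0, ∞) be given, satisfying for all t ∈ (0, r₀]: m'(t)/m(t) ≤ (4N(r) + cr)/t + c whenever t ∈ [s, r] ⊆ (0, r₀], with c > 0 a constant and cr₀ ≤ log 2. Then for all 0 < s ≤ r ≤ r₀: m(r) ≤ 2 (r/s)^{4N(r)+cr} m(s). Similarly, if m'(t)/m(t) ≥ (N(s) − cr)/t − c on [s,r], then m(r) ≥ (1/2)(r/s)^{N(s)−cr} m(s). -/

import Mathlib

/-- Key generic lemma: if on `[s,r] ⊆ (0,r₀]` we have `m'/m ≤ A/t + c`,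
then `log (m r) ≤ log (m s) + A * log (r/s) + c*(r-s)`. -/
lemma log_mass_bound
    (c r₀ : ℝ) (m m' : ℝ → ℝ)
    (hm : ∀ t ∈ Set.Ioc (0 : ℝ) r₀, 0 < m t)
    (hd : ∀ t ∈ Set.Ioc (0 : ℝ) r₀, HasDerivAt m (m' t) t)
    (s r A : ℝ) (hs : 0 < s) (hsr : s ≤ r) (hrr₀ : r ≤ r₀)
    (hb : ∀ t ∈ Set.Icc s r, m' t / m t ≤ A / t + c) :
    Real.log (m r) ≤ Real.log (m s) + A * Real.log (r / s) + c * (r - s) := by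
  have hsub : Set.Icc s r ⊆ Set.Ioc (0 : ℝ) r₀ := fun t ht =>
    ⟨lt_of_lt_of_le hs ht.1, ht.2.trans hrr₀⟩
  set g : ℝ → ℝ := fun t => Real.log (m t) - A * Real.log t - c * t with hg
  have hgd : ∀ t ∈ Set.Icc s r, HasDerivAt g (m' t / m t - (A / t + c)) t := by
    intro t ht
    have ht' := hsub ht
    have ht0 : t ≠ 0 := ne_of_gt ht'.1
    have h1 : HasDerivAt (fun t => Real.log (m t)) (m' t / m t) t :=
      (hd t ht').log (ne_of_gt (hm t ht'))
    have h2 : HasDerivAt (fun t => A * Real.log t) (A * t⁻¹) t :=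
      (Real.hasDerivAt_log ht0).const_mul A
    have h3 : HasDerivAt (fun t => c * t) c t := by
      simpa using (hasDerivAt_id t).const_mul c
    have := (h1.sub h2).sub h3
    exact this.congr_deriv (by ring)
  have hcont : ContinuousOn g (Set.Icc s r) := fun t ht =>
    ((hgd t ht).continuousAt).continuousWithinAt
  have hanti : AntitoneOn g (Set.Icc s r) := by
    apply antitoneOn_of_deriv_nonpos (convex_Icc s r) hcont
    · intro t ht
      rw [interior_Icc] at ht
      exact ((hgd t (Set.Ioo_subset_Icc_self ht)).differentiableAt).differentiableWithinAt
    · intro t ht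
      rw [interior_Icc] at ht
      have ht' := Set.Ioo_subset_Icc_self ht
      rw [(hgd t ht').deriv]
      have := hb t ht'
      linarith
  have hgr : g r ≤ g s :=
    hanti (Set.left_mem_Icc.2 hsr) (Set.right_mem_Icc.2 hsr) hsr
  have hlog : Real.log (r / s) = Real.log r - Real.log s :=
    Real.log_div (ne_of_gt (lt_of_lt_of_le hs hsr)) (ne_of_gt hs)
  simp only [hg] at hgr
  rw [hlog]; linarith


lemma log_mass_bound_lower
    (c r₀ : ℝ) (m m' : ℝ → ℝ)
    (hm : ∀ t ∈ Set.Ioc (0 : ℝ) r₀, 0 < m t)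
    (hd : ∀ t ∈ Set.Ioc (0 : ℝ) r₀, HasDerivAt m (m' t) t)
    (s r A : ℝ) (hs : 0 < s) (hsr : s ≤ r) (hrr₀ : r ≤ r₀)
    (hb : ∀ t ∈ Set.Icc s r, A / t - c ≤ m' t / m t) :
    Real.log (m s) + A * Real.log (r / s) - c * (r - s) ≤ Real.log (m r) := by
  have hsub : Set.Icc s r ⊆ Set.Ioc (0 : ℝ) r₀ := fun t ht =>
    ⟨lt_of_lt_of_le hs ht.1, ht.2.trans hrr₀⟩
  set g : ℝ → ℝ := fun t => Real.log (m t) - A * Real.log t + c * t with hg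
  have hgd : ∀ t ∈ Set.Icc s r, HasDerivAt g (m' t / m t - (A / t - c)) t := by
    intro t ht
    have ht' := hsub ht
    have ht0 : t ≠ 0 := ne_of_gt ht'.1
    have h1 : HasDerivAt (fun t => Real.log (m t)) (m' t / m t) t :=
      (hd t ht').log (ne_of_gt (hm t ht'))
    have h2 : HasDerivAt (fun t => A * Real.log t) (A * t⁻¹) t :=
      (Real.hasDerivAt_log ht0).const_mul A
    have h3 : HasDerivAt (fun t => c * t) c t := by
      simpa using (hasDerivAt_id t).const_mul c
    have := (h1.sub h2).add h3
    exact this.congr_deriv (by ring)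
  have hcont : ContinuousOn g (Set.Icc s r) := fun t ht =>
    ((hgd t ht).continuousAt).continuousWithinAt
  have hmono : MonotoneOn g (Set.Icc s r) := by
    apply monotoneOn_of_deriv_nonneg (convex_Icc s r) hcont
    · intro t ht
      rw [interior_Icc] at ht
      exact ((hgd t (Set.Ioo_subset_Icc_self ht)).differentiableAt).differentiableWithinAt
    · intro t ht
      rw [interior_Icc] at ht
      have ht' := Set.Ioo_subset_Icc_self ht
      rw [(hgd t ht').deriv]
      have := hb t ht'
      linarith
  have hgr : g s ≤ g r :=
    hmono (Set.left_mem_Icc.2 hsr) (Set.right_mem_Icc.2 hsr) hsr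
  have hlog : Real.log (r / s) = Real.log r - Real.log s :=
    Real.log_div (ne_of_gt (lt_of_lt_of_le hs hsr)) (ne_of_gt hs)
  simp only [hg] at hgr
  rw [hlog]; linarith

theorem mass_doubling_estimate
    (c r₀ : ℝ) (hc : 0 < c) (hr₀ : 0 < r₀) (hsmall : c * r₀ ≤ Real.log 2)
    (m m' N : ℝ → ℝ)
    (hm : ∀ t ∈ Set.Ioc (0 : ℝ) r₀, 0 < m t)
    (hN : ∀ t ∈ Set.Ioc (0 : ℝ) r₀, 0 ≤ N t)
    (hd : ∀ t ∈ Set.Ioc (0 : ℝ) r₀, HasDerivAt m (m' t) t) :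
    ∀ s r : ℝ, 0 < s → s ≤ r → r ≤ r₀ →
      ((∀ t ∈ Set.Icc s r, m' t / m t ≤ (4 * N r + c * r) / t + c) →
        m r ≤ 2 * (r / s) ^ (4 * N r + c * r) * m s) ∧
      ((∀ t ∈ Set.Icc s r, (N s - c * r) / t - c ≤ m' t / m t) →
        (1 / 2) * (r / s) ^ (N s - c * r) * m s ≤ m r) := by
  intro s r hs hsr hrr₀
  have hr : 0 < r := lt_of_lt_of_le hs hsr
  have hrs : (0:ℝ) < r / s := div_pos hr hs
  have hms : 0 < m s := hm s ⟨hs, hsr.trans hrr₀⟩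
  have hmr : 0 < m r := hm r ⟨hr, hrr₀⟩
  have hcrs : c * (r - s) ≤ Real.log 2 := by nlinarith
  constructor
  · intro hb
    have key := log_mass_bound c r₀ m m' hm hd s r (4 * N r + c * r) hs hsr hrr₀ hb
    have : m r ≤ Real.exp (Real.log (m s) + (4 * N r + c * r) * Real.log (r / s)
        + Real.log 2) := by
      calc m r = Real.exp (Real.log (m r)) := (Real.exp_log hmr).symm
        _ ≤ _ := Real.exp_le_exp.2 (by linarith)
    calc m r ≤ _ := this
      _ = 2 * (r / s) ^ (4 * N r + c * r) * m s := by
        rw [Real.exp_add, Real.exp_add, Real.exp_log hms, Real.exp_log (by norm_num : (0:ℝ) < 2),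
          Real.rpow_def_of_pos hrs]
        ring_nf
  · intro hb
    have key := log_mass_bound_lower c r₀ m m' hm hd s r (N s - c * r) hs hsr hrr₀ hb
    have h1 : Real.exp (Real.log (m s) + (N s - c * r) * Real.log (r / s)
        - Real.log 2) ≤ m r := by
      calc Real.exp _ ≤ Real.exp (Real.log (m r)) := Real.exp_le_exp.2 (by linarith)
        _ = m r := Real.exp_log hmr
    calc (1 / 2) * (r / s) ^ (N s - c * r) * m s
        = Real.exp (Real.log (m s) + (N s - c * r) * Real.log (r / s) - Real.log 2) := by
          rw [Real.exp_sub, Real.exp_add, Real.exp_log hms,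
            Real.exp_log (by norm_num : (0:ℝ) < 2), Real.rpow_def_of_pos hrs]
          ring_nf
      _ ≤ m r := h1
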